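/- Every language generated by a nonerasing semi-conditional grammar of degree (1,1) is context-sensitive. -/

import Mathlib

/-- Symbols: nonterminals `N` plus terminals `T`. -/
abbrev Symb (N T : Type) := N ⊕ T

/-- `alph w` is the set of symbols occurring in the string `w`. -/
def alph {α : Type} (w : List α) : Set α := {a | a ∈ w}

/-- A (nonerasing) random context grammar: finitely many productions
`(A → x, Per, For)` with `A ∈ N`, `x ∈ (N ∪ T)⁺`, `Per, For ⊆ N`. -/
structure RCG (N T : Type) where
  rules : Set (N × List (Symb N T) × Set N × Set N)
  fin : rules.Finite
  ne : ∀ r ∈ rules, r.2.1 ≠ []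
  start : N

/-- One derivation step of a random context grammar.  The flag `incl` tells whether
the rewritten symbol is included in the context check (`true`: conditions checked
against `alph (uAv)`; `false`: against `alph (uv)`). -/
def RCG.Step {N T : Type} (G : RCG N T) (incl : Bool)
    (s₁ s₂ : List (Symb N T)) : Prop :=
  ∃ A x Per For u v, (A, x, Per, For) ∈ G.rules ∧
    s₁ = u ++ Sum.inl A :: v ∧ s₂ = u ++ x ++ v ∧
    (∀ B ∈ Per, Sum.inl B ∈ alph (if incl then s₁ else u ++ v)) ∧
    (∀ B ∈ For, Sum.inl B ∉ alph (if incl then s₁ else u ++ v))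

/-- The language of a random context grammar (under the chosen derivation definition). -/
def RCG.Lang {N T : Type} (G : RCG N T) (incl : Bool) : Set (List T) :=
  {w | Relation.ReflTransGen (G.Step incl) [Sum.inl G.start] (w.map Sum.inr)}

/-- The family of random context languages over terminal alphabet `T`
(standard definition: rewritten symbol excluded from the context check). -/
def RC (T : Type) : Set (Set (List T)) :=
  {L | ∃ (N : Type) (G : RCG N T), G.Lang false = L}

/-- A (nonerasing) semi-conditional grammar of degree (1,1): productions
`(A → x, Per, For)` with `Per, For ⊆ N ∪ T` of cardinality at most one. -/
structure SCG (N T : Type) where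
  rules : Set (N × List (Symb N T) × Set (Symb N T) × Set (Symb N T))
  fin : rules.Finite
  ne : ∀ r ∈ rules, r.2.1 ≠ []
  per1 : ∀ r ∈ rules, r.2.2.1.Subsingleton
  for1 : ∀ r ∈ rules, r.2.2.2.Subsingleton
  start : N

/-- One derivation step of a semi-conditional grammar; `incl` as in `RCG.Step`. -/
def SCG.Step {N T : Type} (G : SCG N T) (incl : Bool)
    (s₁ s₂ : List (Symb N T)) : Prop :=
  ∃ A x Per For u v, (A, x, Per, For) ∈ G.rules ∧
    s₁ = u ++ Sum.inl A :: v ∧ s₂ = u ++ x ++ v ∧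
    Per ⊆ alph (if incl then s₁ else u ++ v) ∧
    (∀ a ∈ For, a ∉ alph (if incl then s₁ else u ++ v))

/-- The language of a semi-conditional grammar. -/
def SCG.Lang {N T : Type} (G : SCG N T) (incl : Bool) : Set (List T) :=
  {w | Relation.ReflTransGen (G.Step incl) [Sum.inl G.start] (w.map Sum.inr)}

/-- The family SC(1,1): inclusive derivation definition (context `alph (uAv)`). -/
def SC11 (T : Type) : Set (Set (List T)) :=
  {L | ∃ (N : Type) (G : SCG N T), G.Lang true = L}

/-- The family SC'(1,1): exclusive derivation definition (context `alph (uv)`). -/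
def SC11' (T : Type) : Set (Set (List T)) :=
  {L | ∃ (N : Type) (G : SCG N T), G.Lang false = L}

/-- A context-sensitive (length-nondecreasing) grammar: finitely many productions
`l → r` with `|l| ≤ |r|` and `l` containing at least one nonterminal. -/
structure CSG (N T : Type) where
  rules : Set (List (Symb N T) × List (Symb N T))
  fin : rules.Finite
  lhs_nt : ∀ r ∈ rules, ∃ A : N, Sum.inl A ∈ r.1
  len : ∀ r ∈ rules, r.1.length ≤ r.2.length
  start : N

def CSG.Step {N T : Type} (G : CSG N T) (s₁ s₂ : List (Symb N T)) : Prop :=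
  ∃ l r u v, (l, r) ∈ G.rules ∧ s₁ = u ++ l ++ v ∧ s₂ = u ++ r ++ v

def CSG.Lang {N T : Type} (G : CSG N T) : Set (List T) :=
  {w | Relation.ReflTransGen G.Step [Sum.inl G.start] (w.map Sum.inr)}

/-- The family of context-sensitive languages over `T`. -/
def CS (T : Type) : Set (Set (List T)) :=
  {L | ∃ (N : Type) (G : CSG N T), G.Lang = L}

namespace SC11toCS

variable {N T : Type}

/-- Rule tuples of the SCG. -/
abbrev RuleT (N T : Type) := N × List (Symb N T) × Set (Symb N T) × Set (Symb N T)

/-- Head states of the simulating grammar. -/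
inductive QS (N T : Type) where
  | idle
  | check (rt : RuleT N T) (b : Bool)
  | seek (rt : RuleT N T)
  | fin

/-- Nonterminals of the simulating grammar. -/
inductive NS (N T : Type) where
  | start
  | sym (c : Symb N T) (l r : Bool) (q : Option (QS N T))

/-- plain flagged symbol -/
def pS (c : Symb N T) (l r : Bool) : Symb (NS N T) T := Sum.inl (NS.sym c l r none)

/-- head (state-carrying) flagged symbol -/
def hS (q : QS N T) (c : Symb N T) (l r : Bool) : Symb (NS N T) T :=
  Sum.inl (NS.sym c l r (some q))

/-- flag a string: first symbol gets left-flag `l`, last gets right-flag `r`. -/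
def fl : List (Symb N T) → Bool → Bool → List (Symb (NS N T) T)
  | [], _, _ => []
  | c :: t, l, r => pS c l (t.isEmpty && r) :: fl t false r

@[simp] lemma fl_nil (l r : Bool) : fl ([] : List (Symb N T)) l r = [] := rfl

@[simp] lemma fl_cons (c : Symb N T) (t : List (Symb N T)) (l r : Bool) :
    fl (c :: t) l r = pS c l (t.isEmpty && r) :: fl t false r := rfl

lemma fl_append (u v : List (Symb N T)) (l r : Bool) (hv : v ≠ []) :
    fl (u ++ v) l r = fl u l false ++ fl v (u.isEmpty && l) r := by
  induction u generalizing l with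
  | nil => simp
  | cons d t ih =>
      have h1 : (t ++ v).isEmpty = false := by
        simp [List.isEmpty_iff, hv]
      simp only [List.cons_append, fl_cons, ih, List.isEmpty_cons, h1]
      simp

lemma fl_concat (u : List (Symb N T)) (c : Symb N T) (l r : Bool) :
    fl (u ++ [c]) l r = fl u l false ++ [pS c (u.isEmpty && l) r] := by
  rw [fl_append u [c] l r (by simp)]; rfl

/-- a configuration of the simulating grammar: head in state `q` at the
occurrence `c`, with `u` to the left and `v` to the right. -/
def cfg (q : QS N T) (u : List (Symb N T)) (c : Symb N T) (v : List (Symb N T)) :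
    List (Symb (NS N T) T) :=
  fl u true false ++ hS q c u.isEmpty v.isEmpty :: fl v false true

/-- right-hand side of the simulation of `A → x`. -/
def applyRHS : List (Symb N T) → Bool → Bool → List (Symb (NS N T) T)
  | [], _, _ => []
  | c :: t, l, r => hS QS.idle c l (t.isEmpty && r) :: fl t false r

@[simp] lemma applyRHS_length (x : List (Symb N T)) (l r : Bool) :
    (applyRHS x l r).length = x.length := by
  cases x with
  | nil => rfl
  | cons c t =>
      simp only [applyRHS, List.length_cons]
      induction t with
      | nil => rfl
      | cons d t ih => simp [fl, List.length_cons] at ih ⊢; omega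

end SC11toCS
namespace SC11toCS

variable {N T : Type} (G : SCG N T)

/-- the finitely many symbols that can ever occur in a sentential form of `G`. -/
def sig0 : Set (Symb N T) :=
  {Sum.inl G.start} ∪ ⋃ rt ∈ G.rules, {a | a ∈ rt.2.1}

lemma sig0_finite : (sig0 G).Finite := by
  apply Set.Finite.union (Set.finite_singleton _)
  exact Set.Finite.biUnion G.fin (fun rt _ => rt.2.1.finite_toSet)

/-- a rule pair of the simulating grammar -/
abbrev RP (N T : Type) := List (Symb (NS N T) T) × List (Symb (NS N T) T)

def F1 : Set (RP N T) :=
  {([Sum.inl NS.start], [hS QS.idle (Sum.inl G.start) true true])}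

def F2 : Set (RP N T) :=
  {p | ∃ c d l r l' r', c ∈ sig0 G ∧ d ∈ sig0 G ∧
    p = ([pS c l r, hS QS.idle d l' r'], [hS QS.idle c l r, pS d l' r'])}

def F3 : Set (RP N T) :=
  {p | ∃ c r rt b, c ∈ sig0 G ∧ rt ∈ G.rules ∧
    (b = true → rt.2.2.1 ⊆ {c}) ∧ c ∉ rt.2.2.2 ∧
    p = ([hS QS.idle c true r], [hS (QS.check rt b) c true r])}

def F4 : Set (RP N T) :=
  {p | ∃ c d l r l' r' rt b b', c ∈ sig0 G ∧ d ∈ sig0 G ∧ rt ∈ G.rules ∧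
    (b' = true → (b = true ∨ rt.2.2.1 ⊆ {d})) ∧ d ∉ rt.2.2.2 ∧
    p = ([hS (QS.check rt b) c l r, pS d l' r'], [pS c l r, hS (QS.check rt b') d l' r'])}

def F5 : Set (RP N T) :=
  {p | ∃ c l rt, c ∈ sig0 G ∧ rt ∈ G.rules ∧
    p = ([hS (QS.check rt true) c l true], [hS (QS.seek rt) c l true])}

def F6 : Set (RP N T) :=
  {p | ∃ c d l r l' r' rt, c ∈ sig0 G ∧ d ∈ sig0 G ∧ rt ∈ G.rules ∧
    p = ([pS c l r, hS (QS.seek rt) d l' r'], [hS (QS.seek rt) c l r, pS d l' r'])}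

def F7 : Set (RP N T) :=
  {p | ∃ rt l r, rt ∈ G.rules ∧
    p = ([hS (QS.seek rt) (Sum.inl rt.1) l r], applyRHS rt.2.1 l r)}

def F8 : Set (RP N T) :=
  {p | ∃ c r, c ∈ sig0 G ∧ p = ([hS QS.idle c true r], [hS QS.fin c true r])}

def F9 : Set (RP N T) :=
  {p | ∃ t d l l' r', Sum.inr t ∈ sig0 G ∧ d ∈ sig0 G ∧
    p = ([hS QS.fin (Sum.inr t) l false, pS d l' r'], [Sum.inr t, hS QS.fin d l' r'])}

def F10 : Set (RP N T) :=
  {p | ∃ t l, Sum.inr t ∈ sig0 G ∧ p = ([hS QS.fin (Sum.inr t) l true], [Sum.inr t])}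

def Frules : Set (RP N T) :=
  F1 G ∪ F2 G ∪ F3 G ∪ F4 G ∪ F5 G ∪ F6 G ∪ F7 G ∪ F8 G ∪ F9 G ∪ F10 G

lemma Frules_finite : (Frules G).Finite := by
  have hs := sig0_finite G
  have hr := G.fin
  refine (((((((((Set.finite_singleton _).union ?_).union ?_).union ?_).union ?_).union
    ?_).union ?_).union ?_).union ?_).union ?_
  · -- F2
    have : F2 G ⊆ (fun x : (Symb N T × Symb N T × Bool × Bool × Bool × Bool) =>
        (([pS x.1 x.2.2.1 x.2.2.2.1, hS QS.idle x.2.1 x.2.2.2.2.1 x.2.2.2.2.2],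
          [hS QS.idle x.1 x.2.2.1 x.2.2.2.1, pS x.2.1 x.2.2.2.2.1 x.2.2.2.2.2]) : RP N T)) ''
        (sig0 G ×ˢ sig0 G ×ˢ Set.univ) := by
      rintro p ⟨c, d, l, r, l', r', hc, hd, rfl⟩
      exact ⟨(c, d, l, r, l', r'), ⟨hc, hd, trivial⟩, rfl⟩
    exact Set.Finite.subset ((hs.prod (hs.prod Set.finite_univ)).image _) this
  · -- F3
    have : F3 G ⊆ (fun x : (Symb N T × Bool × RuleT N T × Bool) =>
        (([hS QS.idle x.1 true x.2.1], [hS (QS.check x.2.2.1 x.2.2.2) x.1 true x.2.1]) : RP N T)) ''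
        (sig0 G ×ˢ Set.univ ×ˢ G.rules ×ˢ Set.univ) := by
      rintro p ⟨c, r, rt, b, hc, hrt, _, _, rfl⟩
      exact ⟨(c, r, rt, b), ⟨hc, trivial, hrt, trivial⟩, rfl⟩
    exact Set.Finite.subset ((hs.prod (Set.finite_univ.prod (hr.prod Set.finite_univ))).image _) this
  · -- F4
    have : F4 G ⊆ (fun x : (Symb N T × Symb N T × Bool × Bool × Bool × Bool × RuleT N T × Bool × Bool) =>
        (([hS (QS.check x.2.2.2.2.2.2.1 x.2.2.2.2.2.2.2.1) x.1 x.2.2.1 x.2.2.2.1,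
           pS x.2.1 x.2.2.2.2.1 x.2.2.2.2.2.1],
          [pS x.1 x.2.2.1 x.2.2.2.1,
           hS (QS.check x.2.2.2.2.2.2.1 x.2.2.2.2.2.2.2.2) x.2.1 x.2.2.2.2.1 x.2.2.2.2.2.1]) : RP N T)) ''
        (sig0 G ×ˢ sig0 G ×ˢ Set.univ ×ˢ Set.univ ×ˢ Set.univ ×ˢ Set.univ ×ˢ G.rules ×ˢ Set.univ ×ˢ Set.univ) := by
      rintro p ⟨c, d, l, r, l', r', rt, b, b', hc, hd, hrt, _, _, rfl⟩
      exact ⟨(c, d, l, r, l', r', rt, b, b'), ⟨hc, hd, trivial, trivial, trivial, trivial, hrt, trivial, trivial⟩, rfl⟩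
    exact Set.Finite.subset ((hs.prod (hs.prod (Set.finite_univ.prod (Set.finite_univ.prod (Set.finite_univ.prod (Set.finite_univ.prod (hr.prod (Set.finite_univ.prod Set.finite_univ)))))))).image _) this
  · -- F5
    have : F5 G ⊆ (fun x : (Symb N T × Bool × RuleT N T) =>
        (([hS (QS.check x.2.2 true) x.1 x.2.1 true], [hS (QS.seek x.2.2) x.1 x.2.1 true]) : RP N T)) ''
        (sig0 G ×ˢ Set.univ ×ˢ G.rules) := by
      rintro p ⟨c, l, rt, hc, hrt, rfl⟩
      exact ⟨(c, l, rt), ⟨hc, trivial, hrt⟩, rfl⟩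
    exact Set.Finite.subset ((hs.prod (Set.finite_univ.prod hr)).image _) this
  · -- F6
    have : F6 G ⊆ (fun x : (Symb N T × Symb N T × Bool × Bool × Bool × Bool × RuleT N T) =>
        (([pS x.1 x.2.2.1 x.2.2.2.1, hS (QS.seek x.2.2.2.2.2.2) x.2.1 x.2.2.2.2.1 x.2.2.2.2.2.1],
          [hS (QS.seek x.2.2.2.2.2.2) x.1 x.2.2.1 x.2.2.2.1, pS x.2.1 x.2.2.2.2.1 x.2.2.2.2.2.1]) : RP N T)) ''
        (sig0 G ×ˢ sig0 G ×ˢ Set.univ ×ˢ Set.univ ×ˢ Set.univ ×ˢ Set.univ ×ˢ G.rules) := by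
      rintro p ⟨c, d, l, r, l', r', rt, hc, hd, hrt, rfl⟩
      exact ⟨(c, d, l, r, l', r', rt), ⟨hc, hd, trivial, trivial, trivial, trivial, hrt⟩, rfl⟩
    exact Set.Finite.subset ((hs.prod (hs.prod (Set.finite_univ.prod (Set.finite_univ.prod (Set.finite_univ.prod (Set.finite_univ.prod hr)))))).image _) this
  · -- F7
    have : F7 G ⊆ (fun x : (RuleT N T × Bool × Bool) =>
        (([hS (QS.seek x.1) (Sum.inl x.1.1) x.2.1 x.2.2], applyRHS x.1.2.1 x.2.1 x.2.2) : RP N T)) ''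
        (G.rules ×ˢ Set.univ ×ˢ Set.univ) := by
      rintro p ⟨rt, l, r, hrt, rfl⟩
      exact ⟨(rt, l, r), ⟨hrt, trivial, trivial⟩, rfl⟩
    exact Set.Finite.subset ((hr.prod (Set.finite_univ.prod Set.finite_univ)).image _) this
  · -- F8
    have : F8 G ⊆ (fun x : (Symb N T × Bool) =>
        (([hS QS.idle x.1 true x.2], [hS QS.fin x.1 true x.2]) : RP N T)) ''
        (sig0 G ×ˢ Set.univ) := by
      rintro p ⟨c, r, hc, rfl⟩
      exact ⟨(c, r), ⟨hc, trivial⟩, rfl⟩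
    exact Set.Finite.subset ((hs.prod Set.finite_univ).image _) this
  · -- F9
    have : F9 G ⊆ (fun x : (T × Symb N T × Bool × Bool × Bool) =>
        (([hS QS.fin (Sum.inr x.1) x.2.2.1 false, pS x.2.1 x.2.2.2.1 x.2.2.2.2],
          [Sum.inr x.1, hS QS.fin x.2.1 x.2.2.2.1 x.2.2.2.2]) : RP N T)) ''
        ((Sum.inr ⁻¹' sig0 G) ×ˢ sig0 G ×ˢ Set.univ) := by
      rintro p ⟨t, d, l, l', r', ht, hd, rfl⟩
      exact ⟨(t, d, l, l', r'), ⟨ht, hd, trivial⟩, rfl⟩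
    exact Set.Finite.subset (((hs.preimage (Sum.inr_injective.injOn)).prod (hs.prod Set.finite_univ)).image _) this
  · -- F10
    have : F10 G ⊆ (fun x : (T × Bool) =>
        (([hS QS.fin (Sum.inr x.1) x.2 true], [Sum.inr x.1]) : RP N T)) ''
        ((Sum.inr ⁻¹' sig0 G) ×ˢ Set.univ) := by
      rintro p ⟨t, l, ht, rfl⟩
      exact ⟨(t, l), ⟨ht, trivial⟩, rfl⟩
    exact Set.Finite.subset (((hs.preimage (Sum.inr_injective.injOn)).prod Set.finite_univ).image _) this

/-- the simulating context-sensitive grammar. -/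
def simG : CSG (NS N T) T where
  rules := Frules G
  fin := Frules_finite G
  lhs_nt := by
    rintro ⟨lh, rh⟩ hmem
    rcases hmem with ((((((((h | h) | h) | h) | h) | h) | h) | h) | h) | h
    · rcases h with ⟨rfl, rfl⟩; exact ⟨NS.start, by simp⟩
    · obtain ⟨c, d, l, r, l', r', -, -, h⟩ := h
      simp only [Prod.mk.injEq] at h; obtain ⟨rfl, rfl⟩ := h
      exact ⟨NS.sym c l r none, by simp [pS]⟩
    · obtain ⟨c, r, rt, b, -, -, -, -, h⟩ := h
      simp only [Prod.mk.injEq] at h; obtain ⟨rfl, rfl⟩ := h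
      exact ⟨NS.sym c true r (some QS.idle), by simp [hS]⟩
    · obtain ⟨c, d, l, r, l', r', rt, b, b', -, -, -, -, -, h⟩ := h
      simp only [Prod.mk.injEq] at h; obtain ⟨rfl, rfl⟩ := h
      exact ⟨NS.sym c l r (some (QS.check rt b)), by simp [hS]⟩
    · obtain ⟨c, l, rt, -, -, h⟩ := h
      simp only [Prod.mk.injEq] at h; obtain ⟨rfl, rfl⟩ := h
      exact ⟨NS.sym c l true (some (QS.check rt true)), by simp [hS]⟩
    · obtain ⟨c, d, l, r, l', r', rt, -, -, -, h⟩ := h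
      simp only [Prod.mk.injEq] at h; obtain ⟨rfl, rfl⟩ := h
      exact ⟨NS.sym c l r none, by simp [pS]⟩
    · obtain ⟨rt, l, r, -, h⟩ := h
      simp only [Prod.mk.injEq] at h; obtain ⟨rfl, rfl⟩ := h
      exact ⟨NS.sym (Sum.inl rt.1) l r (some (QS.seek rt)), by simp [hS]⟩
    · obtain ⟨c, r, -, h⟩ := h
      simp only [Prod.mk.injEq] at h; obtain ⟨rfl, rfl⟩ := h
      exact ⟨NS.sym c true r (some QS.idle), by simp [hS]⟩
    · obtain ⟨t, d, l, l', r', -, -, h⟩ := h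
      simp only [Prod.mk.injEq] at h; obtain ⟨rfl, rfl⟩ := h
      exact ⟨NS.sym (Sum.inr t) l false (some QS.fin), by simp [hS]⟩
    · obtain ⟨t, l, -, h⟩ := h
      simp only [Prod.mk.injEq] at h; obtain ⟨rfl, rfl⟩ := h
      exact ⟨NS.sym (Sum.inr t) l true (some QS.fin), by simp [hS]⟩
  len := by
    rintro ⟨lh, rh⟩ hmem
    rcases hmem with ((((((((h | h) | h) | h) | h) | h) | h) | h) | h) | h
    · rcases h with ⟨rfl, rfl⟩; simp
    · obtain ⟨c, d, l, r, l', r', -, -, h⟩ := h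
      simp only [Prod.mk.injEq] at h; obtain ⟨rfl, rfl⟩ := h; simp
    · obtain ⟨c, r, rt, b, -, -, -, -, h⟩ := h
      simp only [Prod.mk.injEq] at h; obtain ⟨rfl, rfl⟩ := h; simp
    · obtain ⟨c, d, l, r, l', r', rt, b, b', -, -, -, -, -, h⟩ := h
      simp only [Prod.mk.injEq] at h; obtain ⟨rfl, rfl⟩ := h; simp
    · obtain ⟨c, l, rt, -, -, h⟩ := h
      simp only [Prod.mk.injEq] at h; obtain ⟨rfl, rfl⟩ := h; simp
    · obtain ⟨c, d, l, r, l', r', rt, -, -, -, h⟩ := h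
      simp only [Prod.mk.injEq] at h; obtain ⟨rfl, rfl⟩ := h; simp
    · obtain ⟨rt, l, r, hrt, h⟩ := h
      simp only [Prod.mk.injEq] at h; obtain ⟨rfl, rfl⟩ := h
      simp only [applyRHS_length, List.length_singleton]
      exact List.length_pos_iff.mpr (G.ne rt hrt)
    · obtain ⟨c, r, -, h⟩ := h
      simp only [Prod.mk.injEq] at h; obtain ⟨rfl, rfl⟩ := h; simp
    · obtain ⟨t, d, l, l', r', -, -, h⟩ := h
      simp only [Prod.mk.injEq] at h; obtain ⟨rfl, rfl⟩ := h; simp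
    · obtain ⟨t, l, -, h⟩ := h
      simp only [Prod.mk.injEq] at h; obtain ⟨rfl, rfl⟩ := h; simp
  start := NS.start

end SC11toCS
namespace SC11toCS

@[simp] lemma mem_alph {α : Type} {a : α} {w : List α} : a ∈ alph w ↔ a ∈ w := Iff.rfl

@[simp] lemma isEmpty_map' {α β : Type} (f : α → β) (l : List α) :
    (l.map f).isEmpty = l.isEmpty := by cases l <;> simp

@[simp] lemma isEmpty_append' {α : Type} (u v : List α) :
    (u ++ v).isEmpty = (u.isEmpty && v.isEmpty) := by cases u <;> simp

variable {N T : Type} (G : SCG N T)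

lemma mF1 {p} (h : p ∈ F1 G) : p ∈ Frules G := Or.inl (Or.inl (Or.inl (Or.inl (Or.inl (Or.inl (Or.inl (Or.inl (Or.inl (h)))))))))
lemma mF2 {p} (h : p ∈ F2 G) : p ∈ Frules G := Or.inl (Or.inl (Or.inl (Or.inl (Or.inl (Or.inl (Or.inl (Or.inl (Or.inr h))))))))
lemma mF3 {p} (h : p ∈ F3 G) : p ∈ Frules G := Or.inl (Or.inl (Or.inl (Or.inl (Or.inl (Or.inl (Or.inl (Or.inr h)))))))
lemma mF4 {p} (h : p ∈ F4 G) : p ∈ Frules G := Or.inl (Or.inl (Or.inl (Or.inl (Or.inl (Or.inl (Or.inr h))))))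
lemma mF5 {p} (h : p ∈ F5 G) : p ∈ Frules G := Or.inl (Or.inl (Or.inl (Or.inl (Or.inl (Or.inr h)))))
lemma mF6 {p} (h : p ∈ F6 G) : p ∈ Frules G := Or.inl (Or.inl (Or.inl (Or.inl (Or.inr h))))
lemma mF7 {p} (h : p ∈ F7 G) : p ∈ Frules G := Or.inl (Or.inl (Or.inl (Or.inr h)))
lemma mF8 {p} (h : p ∈ F8 G) : p ∈ Frules G := Or.inl (Or.inl (Or.inr h))
lemma mF9 {p} (h : p ∈ F9 G) : p ∈ Frules G := Or.inl (Or.inr h)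
lemma mF10 {p} (h : p ∈ F10 G) : p ∈ Frules G := Or.inr h

lemma mkStep {lh rh : List (Symb (NS N T) T)} (h : (lh, rh) ∈ Frules G)
    (u v : List (Symb (NS N T) T)) {z₁ z₂ : List (Symb (NS N T) T)}
    (h₁ : z₁ = u ++ lh ++ v) (h₂ : z₂ = u ++ rh ++ v) : (simG G).Step z₁ z₂ :=
  ⟨lh, rh, u, v, h, h₁, h₂⟩

/-- a single left move of the head (in state `idle` or `seek rt`). -/
lemma stepLeft (q : QS N T)
    (Hmove : ∀ c d l r l' r', c ∈ sig0 G → d ∈ sig0 G →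
      (([pS c l r, hS q d l' r'], [hS q c l r, pS d l' r']) : RP N T) ∈ Frules G)
    (u₀ : List (Symb N T)) (cl c : Symb N T) (v : List (Symb N T))
    (hcl : cl ∈ sig0 G) (hc : c ∈ sig0 G) :
    (simG G).Step (cfg q (u₀ ++ [cl]) c v) (cfg q u₀ cl (c :: v)) := by
  apply mkStep G
    (Hmove cl c (u₀.isEmpty && true) false (false) (v.isEmpty) hcl hc)
    (fl u₀ true false) (fl v false true)
  · simp [cfg, fl_concat]
  · simp [cfg]

/-- walking the head left across `u`. -/
lemma walkLeft (q : QS N T)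
    (Hmove : ∀ c d l r l' r', c ∈ sig0 G → d ∈ sig0 G →
      (([pS c l r, hS q d l' r'], [hS q c l r, pS d l' r']) : RP N T) ∈ Frules G)
    (u₁ : List (Symb N T)) :
    ∀ (u : List (Symb N T)) (c : Symb N T) (v : List (Symb N T)),
      (∀ a ∈ u, a ∈ sig0 G) → c ∈ sig0 G →
      Relation.ReflTransGen (simG G).Step (cfg q (u₁ ++ u) c v)
        (match u with
          | [] => cfg q u₁ c v
          | d :: u' => cfg q u₁ d (u' ++ c :: v)) := by
  intro u
  induction u using List.reverseRecOn with
  | nil => intro c v _ _; simp; exact Relation.ReflTransGen.refl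
  | append_singleton us e ih =>
      intro c v hu hc
      have he : e ∈ sig0 G := hu e (by simp)
      have step1 : (simG G).Step (cfg q (u₁ ++ (us ++ [e])) c v) (cfg q (u₁ ++ us) e (c :: v)) := by
        have := stepLeft G q Hmove (u₁ ++ us) e c v he hc
        rwa [List.append_assoc] at this
      have step2 := ih e (c :: v) (fun a ha => hu a (by simp [ha])) he
      refine Relation.ReflTransGen.head step1 ?_
      cases us with
      | nil => simpa using step2
      | cons d u' =>
          simp only [List.cons_append, List.append_assoc, List.singleton_append] at step2 ⊢
          simpa using step2

end SC11toCS
namespace SC11toCS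

variable {N T : Type} (G : SCG N T)

lemma alph_singleton {c : Symb N T} : alph [c] = {c} := by ext a; simp [alph]

lemma per_split {S : Set (Symb N T)} (hss : S.Subsingleton) {w : List (Symb N T)}
    {d : Symb N T} (h : S ⊆ alph (w ++ [d])) : S ⊆ alph w ∨ S ⊆ {d} := by
  rcases hss.eq_empty_or_singleton with rfl | ⟨a, rfl⟩
  · left; simp
  · have ha : a ∈ alph (w ++ [d]) := h rfl
    simp only [mem_alph, List.mem_append, List.mem_singleton] at ha
    rcases ha with ha | rfl
    · left; intro x hx; rw [Set.mem_singleton_iff] at hx; subst hx; exact ha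
    · right; rfl

lemma x_sub_sig0 {rt : RuleT N T} (hrt : rt ∈ G.rules) : ∀ a ∈ rt.2.1, a ∈ sig0 G :=
  fun a ha => Or.inr (Set.mem_biUnion hrt ha)

lemma reach_sig0 {s : List (Symb N T)}
    (h : Relation.ReflTransGen (G.Step true) [Sum.inl G.start] s) :
    ∀ a ∈ s, a ∈ sig0 G := by
  induction h with
  | refl => intro a ha; simp at ha; subst ha; exact Or.inl rfl
  | tail _ hst ih =>
      obtain ⟨A, x, Per, For, u, v, hrt, h1, h2, _, _⟩ := hst
      subst h1 h2
      intro a ha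
      simp only [List.mem_append, List.mem_cons] at ha
      rcases ha with (ha | ha) | ha
      · exact ih a (by simp [ha])
      · exact x_sub_sig0 G hrt a ha
      · exact ih a (by simp [ha])

lemma reach_ne {s : List (Symb N T)}
    (h : Relation.ReflTransGen (G.Step true) [Sum.inl G.start] s) : s ≠ [] := by
  induction h with
  | refl => simp
  | tail _ hst _ =>
      obtain ⟨A, x, Per, For, u, v, hrt, h1, h2, _, _⟩ := hst
      subst h2
      intro hcontra
      have hlen := congrArg List.length hcontra
      simp only [List.length_append, List.length_nil] at hlen
      have hx0 : x.length = 0 := by omega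
      exact (G.ne _ hrt) (List.length_eq_zero_iff.mp hx0)

/-- beginning a check at the left end. -/
lemma startCheck (rt : RuleT N T) (hrt : rt ∈ G.rules) (c : Symb N T)
    (v : List (Symb N T)) (hc : c ∈ sig0 G) (hcF : c ∉ rt.2.2.2) :
    ∃ b₀ : Bool, (b₀ = true ↔ rt.2.2.1 ⊆ alph [c]) ∧
      (simG G).Step (cfg QS.idle [] c v) (cfg (QS.check rt b₀) [] c v) := by
  by_cases hP : rt.2.2.1 ⊆ ({c} : Set (Symb N T))
  · refine ⟨true, by simp [alph_singleton, hP], ?_⟩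
    refine mkStep G (mF3 G ⟨c, v.isEmpty, rt, true, hc, hrt, fun _ => hP, hcF, rfl⟩)
      [] (fl v false true) ?_ ?_ <;> simp [cfg]
  · refine ⟨false, by simp [alph_singleton, hP], ?_⟩
    refine mkStep G (mF3 G ⟨c, v.isEmpty, rt, false, hc, hrt, fun h => by simp at h, hcF, rfl⟩)
      [] (fl v false true) ?_ ?_ <;> simp [cfg]

/-- one right move of the check sweep. -/
lemma stepCheck (rt : RuleT N T) (hrt : rt ∈ G.rules) (hss : rt.2.2.1.Subsingleton)
    (u : List (Symb N T)) (c d : Symb N T) (v' : List (Symb N T)) (b : Bool)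
    (hc : c ∈ sig0 G) (hd : d ∈ sig0 G) (hdF : d ∉ rt.2.2.2)
    (hb : b = true ↔ rt.2.2.1 ⊆ alph (u ++ [c])) :
    ∃ b' : Bool, (b' = true ↔ rt.2.2.1 ⊆ alph ((u ++ [c]) ++ [d])) ∧
      (simG G).Step (cfg (QS.check rt b) u c (d :: v'))
        (cfg (QS.check rt b') (u ++ [c]) d v') := by
  have mk : ∀ b' : Bool, (b' = true → (b = true ∨ rt.2.2.1 ⊆ {d})) →
      (simG G).Step (cfg (QS.check rt b) u c (d :: v'))
        (cfg (QS.check rt b') (u ++ [c]) d v') := by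
    intro b' hcond
    refine mkStep G
      (mF4 G ⟨c, d, u.isEmpty, false, false, (List.isEmpty v' && true), rt, b, b',
        hc, hd, hrt, hcond, hdF, rfl⟩)
      (fl u true false) (fl v' false true) ?_ ?_
    · simp [cfg]
    · simp [cfg, fl_concat]
  by_cases hP : rt.2.2.1 ⊆ alph ((u ++ [c]) ++ [d])
  · refine ⟨true, iff_of_true rfl hP, mk true (fun _ => ?_)⟩
    rcases per_split hss hP with h | h
    · exact Or.inl (hb.mpr h)
    · exact Or.inr h
  · exact ⟨false, iff_of_false (by simp) hP, mk false (by simp)⟩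

/-- the full check sweep. -/
lemma sweepCheck (rt : RuleT N T) (hrt : rt ∈ G.rules) (hss : rt.2.2.1.Subsingleton) :
    ∀ (v u : List (Symb N T)) (c : Symb N T) (b : Bool),
      c ∈ sig0 G → (∀ a ∈ v, a ∈ sig0 G) →
      (b = true ↔ rt.2.2.1 ⊆ alph (u ++ [c])) →
      (∀ a ∈ rt.2.2.2, a ∉ alph (u ++ c :: v)) →
      ∃ u' c' b', u ++ c :: v = u' ++ [c'] ∧
        (b' = true ↔ rt.2.2.1 ⊆ alph (u ++ c :: v)) ∧
        Relation.ReflTransGen (simG G).Step (cfg (QS.check rt b) u c v)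
          (cfg (QS.check rt b') u' c' []) := by
  intro v
  induction v with
  | nil => intro u c b hc _ hb _; exact ⟨u, c, b, rfl, hb, Relation.ReflTransGen.refl⟩
  | cons d v' ih =>
      intro u c b hc hv hb hFor
      have hd : d ∈ sig0 G := hv d (by simp)
      have hdF : d ∉ rt.2.2.2 := fun h => hFor d h (by simp)
      obtain ⟨b', hb', hstep⟩ := stepCheck G rt hrt hss u c d v' b hc hd hdF hb
      have hFor' : ∀ a ∈ rt.2.2.2, a ∉ alph ((u ++ [c]) ++ d :: v') := by
        intro a ha
        have := hFor a ha
        simp only [mem_alph, List.mem_append, List.mem_cons, List.mem_singleton] at this ⊢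
        tauto
      obtain ⟨u', c', b'', hdec, hiff, hrtg⟩ :=
        ih (u ++ [c]) d b' hd (fun a ha => hv a (by simp [ha])) hb' hFor'
      refine ⟨u', c', b'', by simpa using hdec, ?_, Relation.ReflTransGen.head hstep hrtg⟩
      rw [hiff]
      have e : u ++ [c] ++ d :: v' = u ++ c :: d :: v' := by simp
      rw [e]

lemma toSeek (rt : RuleT N T) (hrt : rt ∈ G.rules) (u : List (Symb N T)) (c : Symb N T)
    (hc : c ∈ sig0 G) :
    (simG G).Step (cfg (QS.check rt true) u c []) (cfg (QS.seek rt) u c []) := by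
  refine mkStep G (mF5 G ⟨c, u.isEmpty, rt, hc, hrt, rfl⟩) (fl u true false) [] ?_ ?_ <;>
    simp [cfg]

lemma applyRHS_glue (x₀ : Symb N T) (xt v : List (Symb N T)) (l : Bool) :
    applyRHS (x₀ :: xt) l v.isEmpty ++ fl v false true =
      hS QS.idle x₀ l (xt ++ v).isEmpty :: fl (xt ++ v) false true := by
  simp only [applyRHS, List.cons_append, isEmpty_append']
  congr 1
  cases v with
  | nil => simp
  | cons e v' =>
      cases xt with
      | nil => simp
      | cons f xt' =>
          rw [fl_append _ _ _ _ (by simp)]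
          simp

lemma applyStep (rt : RuleT N T) (hrt : rt ∈ G.rules) (x₀ : Symb N T)
    (xt : List (Symb N T)) (hx : rt.2.1 = x₀ :: xt) (u v : List (Symb N T)) :
    (simG G).Step (cfg (QS.seek rt) u (Sum.inl rt.1) v) (cfg QS.idle u x₀ (xt ++ v)) := by
  refine mkStep G (mF7 G ⟨rt, u.isEmpty, v.isEmpty, hrt, rfl⟩)
    (fl u true false) (fl v false true) ?_ ?_
  · simp [cfg]
  · rw [hx]
    simp only [cfg, List.append_assoc]
    rw [applyRHS_glue]

end SC11toCS
namespace SC11toCS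

variable {N T : Type} (G : SCG N T)

/-- canonical configuration: head idle at the left end. -/
def cfg0 : List (Symb N T) → List (Symb (NS N T) T)
  | [] => []
  | c :: v => cfg QS.idle [] c v

lemma HmoveIdle : ∀ (c d : Symb N T) (l r l' r' : Bool), c ∈ sig0 G → d ∈ sig0 G →
    (([pS c l r, hS QS.idle d l' r'], [hS QS.idle c l r, pS d l' r']) : RP N T) ∈ Frules G :=
  fun c d l r l' r' hc hd => mF2 G ⟨c, d, l, r, l', r', hc, hd, rfl⟩

lemma HmoveSeek (rt : RuleT N T) (hrt : rt ∈ G.rules) :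
    ∀ (c d : Symb N T) (l r l' r' : Bool), c ∈ sig0 G → d ∈ sig0 G →
    (([pS c l r, hS (QS.seek rt) d l' r'], [hS (QS.seek rt) c l r, pS d l' r']) : RP N T)
      ∈ Frules G :=
  fun c d l r l' r' hc hd => mF6 G ⟨c, d, l, r, l', r', rt, hc, hd, hrt, rfl⟩

/-- simulation of a single SCG step, from canonical configuration to canonical
configuration. -/
lemma simStep1 {s s' : List (Symb N T)} (hstep : G.Step true s s')
    (hsig : ∀ a ∈ s, a ∈ sig0 G) :
    Relation.ReflTransGen (simG G).Step (cfg0 s) (cfg0 s') := by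
  obtain ⟨A, x, Per, For, u, v, hrt, hs, hs', hPer, hFor⟩ := hstep
  set rt : RuleT N T := (A, x, Per, For) with hrtdef
  simp only [if_pos] at hPer hFor
  subst hs hs'
  -- write s = c₀ :: w
  obtain ⟨c₀, w, hcw⟩ : ∃ c₀ w, u ++ Sum.inl A :: v = c₀ :: w := by
    cases hu : u with
    | nil => exact ⟨Sum.inl A, v, by simp⟩
    | cons e u' => exact ⟨e, u' ++ Sum.inl A :: v, by simp⟩
  have hc₀ : c₀ ∈ sig0 G := hsig c₀ (by rw [hcw]; simp)
  have hw : ∀ a ∈ w, a ∈ sig0 G := fun a ha => hsig a (by rw [hcw]; simp [ha])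
  have hc₀F : c₀ ∉ rt.2.2.2 := fun h => hFor c₀ h (by rw [hcw]; simp)
  -- phase 1 : start the check
  obtain ⟨b₀, hb₀, step1⟩ := startCheck G rt hrt c₀ w hc₀ hc₀F
  -- phase 2 : sweep right
  have hFor' : ∀ a ∈ rt.2.2.2, a ∉ alph ([] ++ c₀ :: w) := by
    intro a ha
    rw [List.nil_append, ← hcw]
    exact hFor a ha
  obtain ⟨u', c', b', hdec, hiff, step2⟩ :=
    sweepCheck G rt hrt (G.per1 rt hrt) w [] c₀ b₀ hc₀ hw (by simpa using hb₀) hFor'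
  rw [List.nil_append] at hdec
  have hb'true : b' = true := by
    rw [hiff, List.nil_append, ← hcw]; exact hPer
  subst hb'true
  -- phase 3 : switch to seek
  have hc' : c' ∈ sig0 G := by
    have hm : c' ∈ c₀ :: w := by rw [hdec]; simp
    rcases List.mem_cons.mp hm with h | h
    · exact h ▸ hc₀
    · exact hw _ h
  have step3 := toSeek G rt hrt u' c' hc'
  -- phase 4 : walk left to the occurrence of A
  have hA : (Sum.inl A : Symb N T) ∈ sig0 G := hsig _ (by simp)
  have step4 : Relation.ReflTransGen (simG G).Step (cfg (QS.seek rt) u' c' [])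
      (cfg (QS.seek rt) u (Sum.inl A) v) := by
    rw [← hcw] at hdec
    rcases List.eq_nil_or_concat v with rfl | ⟨v₀, e, rfl⟩
    · have h2 : u ++ [Sum.inl A] = u' ++ [c'] := by simpa using hdec
      obtain ⟨h3, h4⟩ := List.append_inj' h2 rfl
      have he : (Sum.inl A : Symb N T) = c' := by simpa using h4
      rw [← h3, ← he]
    · have h2 : (u ++ Sum.inl A :: v₀) ++ [e] = u' ++ [c'] := by rw [← hdec]; simp
      obtain ⟨h3, h4⟩ := List.append_inj' h2 rfl
      have he : e = c' := by simpa using h4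
      subst he
      rw [← h3]
      have walk := walkLeft G (QS.seek rt) (HmoveSeek G rt hrt) u (Sum.inl A :: v₀) e []
        (fun a ha => hsig a (by simp at ha ⊢; tauto))
        (hsig e (by simp))
      simpa using walk
  -- phase 5 : apply the production
  obtain ⟨x₀, xt, hx⟩ : ∃ x₀ xt, rt.2.1 = x₀ :: xt := by
    cases hx : rt.2.1 with
    | nil => exact absurd hx (G.ne rt hrt)
    | cons a t => exact ⟨a, t, rfl⟩
  have step5 := applyStep G rt hrt x₀ xt hx u v
  -- phase 6 : walk back to the left end
  have hx₀ : x₀ ∈ sig0 G := x_sub_sig0 G hrt x₀ (by rw [hx]; simp)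
  have hxt : ∀ a ∈ xt, a ∈ sig0 G := fun a ha => x_sub_sig0 G hrt a (by rw [hx]; simp [ha])
  have step6 : Relation.ReflTransGen (simG G).Step (cfg QS.idle u x₀ (xt ++ v))
      (cfg0 (u ++ x ++ v)) := by
    have hxx : x = x₀ :: xt := hx
    have walk := walkLeft G QS.idle (HmoveIdle G) [] u x₀ (xt ++ v)
      (fun a ha => hsig a (by simp [ha])) hx₀
    rw [List.nil_append] at walk
    cases u with
    | nil => rw [hxx]; simpa [cfg0] using walk
    | cons d u'' =>
        rw [hxx]
        simp only [cfg0, List.cons_append]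
        simpa [List.append_assoc] using walk
  -- assemble
  calc Relation.ReflTransGen (simG G).Step (cfg0 (u ++ Sum.inl A :: v)) _ := by
        rw [hcw]
        exact Relation.ReflTransGen.head step1
          (step2.trans (Relation.ReflTransGen.head step3 (step4.trans
            (Relation.ReflTransGen.head step5 step6))))

end SC11toCS
namespace SC11toCS

variable {N T : Type} (G : SCG N T)

lemma finSweep : ∀ (w₂ w₁ : List T) (t : T) (lb : Bool),
    (Sum.inr t : Symb N T) ∈ sig0 G → (∀ a ∈ w₂, (Sum.inr a : Symb N T) ∈ sig0 G) →
    Relation.ReflTransGen (simG G).Step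
      (List.map Sum.inr w₁ ++ hS QS.fin (Sum.inr t) lb w₂.isEmpty ::
        fl (List.map Sum.inr w₂) false true)
      (List.map Sum.inr (w₁ ++ t :: w₂)) := by
  intro w₂
  induction w₂ with
  | nil =>
      intro w₁ t lb ht _
      refine Relation.ReflTransGen.single ?_
      refine mkStep G (mF10 G ⟨t, lb, ht, rfl⟩) (List.map Sum.inr w₁) [] ?_ ?_ <;> simp
  | cons t' w₂' ih =>
      intro w₁ t lb ht hw
      have ht' : (Sum.inr t' : Symb N T) ∈ sig0 G := hw t' (by simp)
      refine Relation.ReflTransGen.head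
        (b := List.map Sum.inr (w₁ ++ [t]) ++ hS QS.fin (Sum.inr t') false w₂'.isEmpty ::
          fl (List.map Sum.inr w₂') false true) ?_ ?_
      · refine mkStep G
          (mF9 G ⟨t, Sum.inr t', lb, false, w₂'.isEmpty, ht, ht', rfl⟩)
          (List.map Sum.inr w₁) (fl (List.map Sum.inr w₂') false true) ?_ ?_
        · simp
        · simp
      · have := ih (w₁ ++ [t]) t' false ht' (fun a ha => hw a (by simp [ha]))
        simpa using this

/-- completeness : the language of `G` is contained in that of the simulating CSG. -/
lemma complete : G.Lang true ⊆ (simG G).Lang := by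
  intro w hw
  have hw' : Relation.ReflTransGen (G.Step true) [Sum.inl G.start] (w.map Sum.inr) := hw
  have hmain : ∀ s, Relation.ReflTransGen (G.Step true) [Sum.inl G.start] s →
      Relation.ReflTransGen (simG G).Step [Sum.inl NS.start] (cfg0 s) := by
    intro s hs
    induction hs with
    | refl =>
        refine Relation.ReflTransGen.single ?_
        refine mkStep G (mF1 G rfl) [] [] ?_ ?_ <;> simp [cfg0, cfg]
    | tail hpre hst ih =>
        exact ih.trans (simStep1 G hst (reach_sig0 G hpre))
  have h1 := hmain _ hw'
  have hne := reach_ne G hw'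
  obtain ⟨t, w', rfl⟩ : ∃ t w', w = t :: w' := by
    cases w with
    | nil => simp at hne
    | cons t w' => exact ⟨t, w', rfl⟩
  have hsig := reach_sig0 G hw'
  have ht : (Sum.inr t : Symb N T) ∈ sig0 G := hsig _ (by simp)
  have hw'' : ∀ a ∈ w', (Sum.inr a : Symb N T) ∈ sig0 G := fun a ha => hsig _ (by simp [ha])
  -- begin the final sweep
  have stepF : (simG G).Step (cfg0 (List.map Sum.inr (t :: w')))
      ([] ++ hS QS.fin (Sum.inr t) true w'.isEmpty :: fl (List.map Sum.inr w') false true) := by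
    refine mkStep G (mF8 G ⟨Sum.inr t, w'.isEmpty, ht, rfl⟩) []
      (fl (List.map Sum.inr w') false true) ?_ ?_
    · simp [cfg0, cfg]
    · simp
  have sweep := finSweep G w' [] t true ht hw''
  show Relation.ReflTransGen (simG G).Step [Sum.inl (simG G).start] (List.map Sum.inr (t :: w'))
  have : (simG G).start = NS.start := rfl
  rw [this]
  refine h1.trans (Relation.ReflTransGen.head stepF ?_)
  simpa using sweep

end SC11toCS
namespace SC11toCS

variable {N T : Type}

/-- head symbols -/
def isH : Symb (NS N T) T → Prop
  | Sum.inl (NS.sym _ _ _ (some _)) => True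
  | _ => False

@[simp] lemma isH_hS (q : QS N T) (c l r) : isH (hS q c l r) := trivial
@[simp] lemma not_isH_pS (c : Symb N T) (l r) : ¬ isH (pS c l r) := fun h => h
@[simp] lemma not_isH_inr (t : T) : ¬ isH (Sum.inr t : Symb (NS N T) T) := fun h => h
@[simp] lemma not_isH_start : ¬ isH (Sum.inl NS.start : Symb (NS N T) T) := fun h => h

lemma fl_no_head (s : List (Symb N T)) (l r : Bool) : ∀ x ∈ fl s l r, ¬ isH x := by
  induction s generalizing l with
  | nil => simp
  | cons c t ih =>
      intro x hx
      rcases List.mem_cons.mp hx with rfl | hx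
      · simp
      · exact ih false x hx

lemma map_inr_no_head (w : List T) :
    ∀ x ∈ (List.map Sum.inr w : List (Symb (NS N T) T)), ¬ isH x := by
  intro x hx
  obtain ⟨t, -, rfl⟩ := List.mem_map.mp hx
  simp

lemma start_not_fl (s : List (Symb N T)) (l r : Bool) :
    (Sum.inl NS.start : Symb (NS N T) T) ∉ fl s l r := by
  induction s generalizing l with
  | nil => simp
  | cons c t ih =>
      intro hx
      rcases List.mem_cons.mp hx with h | h
      · exact absurd h.symm (by simp [pS])
      · exact ih false h

lemma split_head {a b c d : List (Symb (NS N T) T)} {h h' : Symb (NS N T) T}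
    (hh' : isH h') (Ha : ∀ x ∈ a, ¬ isH x) (Hb : ∀ x ∈ b, ¬ isH x)
    (E : a ++ h :: b = c ++ h' :: d) : a = c ∧ h = h' ∧ b = d := by
  induction a generalizing c with
  | nil =>
      cases c with
      | nil => simp at E; exact ⟨rfl, E.1, E.2⟩
      | cons y c' =>
          simp at E
          obtain ⟨rfl, E2⟩ := E
          exfalso
          exact Hb h' (E2 ▸ List.mem_append_right c' List.mem_cons_self) hh'
  | cons x a' ih =>
      cases c with
      | nil =>
          simp at E
          obtain ⟨rfl, -⟩ := E
          exact absurd hh' (Ha x (by simp))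
      | cons y c' =>
          simp at E
          obtain ⟨rfl, E2⟩ := E
          obtain ⟨h1, h2, h3⟩ := ih (fun z hz => Ha z (by simp [hz])) E2
          exact ⟨by rw [h1], h2, h3⟩

lemma align0 {p s u' v' rest : List (Symb (NS N T) T)} {h0 h1 : Symb (NS N T) T}
    (hh1 : isH h1) (hp : ∀ x ∈ p, ¬ isH x) (hs : ∀ x ∈ s, ¬ isH x)
    (E : p ++ h0 :: s = u' ++ (h1 :: rest) ++ v') :
    u' = p ∧ h1 = h0 ∧ rest ++ v' = s := by
  have E' : p ++ h0 :: s = u' ++ h1 :: (rest ++ v') := by rw [E]; simp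
  obtain ⟨e1, e2, e3⟩ := split_head hh1 hp hs E'
  exact ⟨e1.symm, e2.symm, e3.symm⟩

lemma align1 {p s u' v' : List (Symb (NS N T) T)} {h0 h1 p1 : Symb (NS N T) T}
    (hh1 : isH h1) (hp : ∀ x ∈ p, ¬ isH x) (hs : ∀ x ∈ s, ¬ isH x)
    (E : p ++ h0 :: s = u' ++ [p1, h1] ++ v') :
    u' ++ [p1] = p ∧ h1 = h0 ∧ v' = s := by
  have E' : p ++ h0 :: s = (u' ++ [p1]) ++ h1 :: v' := by rw [E]; simp
  obtain ⟨e1, e2, e3⟩ := split_head hh1 hp hs E'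
  exact ⟨e1.symm, e2.symm, e3.symm⟩

lemma fl_cons_inv {v : List (Symb N T)} {l r : Bool} {y : Symb (NS N T) T}
    {ys : List (Symb (NS N T) T)} (h : fl v l r = y :: ys) :
    ∃ d₀ v₀, v = d₀ :: v₀ ∧ y = pS d₀ l (v₀.isEmpty && r) ∧ ys = fl v₀ false r := by
  cases v with
  | nil => simp at h
  | cons d₀ v₀ =>
      simp only [fl_cons] at h
      exact ⟨d₀, v₀, rfl, (List.cons.injEq _ _ _ _ ▸ h).1.symm,
        (List.cons.injEq _ _ _ _ ▸ h).2.symm⟩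

lemma fl_concat_inv {u : List (Symb N T)} {l r : Bool} {y : Symb (NS N T) T}
    {ys : List (Symb (NS N T) T)} (h : fl u l r = ys ++ [y]) :
    ∃ u₀ cl, u = u₀ ++ [cl] ∧ ys = fl u₀ l false ∧ y = pS cl (u₀.isEmpty && l) r := by
  rcases List.eq_nil_or_concat u with rfl | ⟨u₀, cl, rfl⟩
  · simp at h
  · rw [List.concat_eq_append] at h ⊢
    rw [fl_concat] at h
    obtain ⟨h1, h2⟩ := List.append_inj' h rfl
    exact ⟨u₀, cl, rfl, h1.symm, by simpa using h2.symm⟩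

@[simp] lemma hS_inj {q q' : QS N T} {c c' l l' r r'} :
    hS q c l r = hS q' c' l' r' ↔ q = q' ∧ c = c' ∧ l = l' ∧ r = r' := by
  constructor
  · intro h
    simp only [hS, Sum.inl.injEq, NS.sym.injEq, Option.some.injEq] at h
    tauto
  · rintro ⟨rfl, rfl, rfl, rfl⟩; rfl

@[simp] lemma pS_inj {c c' : Symb N T} {l l' r r'} :
    pS c l r = pS c' l' r' ↔ c = c' ∧ l = l' ∧ r = r' := by
  constructor
  · intro h
    simp only [pS, Sum.inl.injEq, NS.sym.injEq] at h
    tauto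
  · rintro ⟨rfl, rfl, rfl⟩; rfl

lemma mem_of_eq_append {α : Type} {z u' v' lh : List α} (h : z = u' ++ lh ++ v') :
    ∀ x ∈ lh, x ∈ z := by
  intro x hx; rw [h]; simp [hx]

end SC11toCS
namespace SC11toCS

variable {N T : Type} (G : SCG N T)

@[simp] lemma pS_ne_start (c : Symb N T) (l r) :
    pS c l r ≠ (Sum.inl NS.start : Symb (NS N T) T) := by simp [pS]
@[simp] lemma hS_ne_start (q : QS N T) (c l r) :
    hS q c l r ≠ (Sum.inl NS.start : Symb (NS N T) T) := by simp [hS]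

def Reach (s : List (Symb N T)) : Prop :=
  Relation.ReflTransGen (G.Step true) [Sum.inl G.start] s

def StateOK : QS N T → List (Symb N T) → Symb N T → List (Symb N T) → Prop
  | QS.idle, _, _, _ => True
  | QS.check rt b, u, c, _ => rt ∈ G.rules ∧ (b = true → rt.2.2.1 ⊆ alph (u ++ [c])) ∧
      (∀ a ∈ rt.2.2.2, a ∉ alph (u ++ [c]))
  | QS.seek rt, u, c, v => rt ∈ G.rules ∧ rt.2.2.1 ⊆ alph (u ++ c :: v) ∧
      (∀ a ∈ rt.2.2.2, a ∉ alph (u ++ c :: v))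
  | QS.fin, _, _, _ => False

def Inv (z : List (Symb (NS N T) T)) : Prop :=
  z = [Sum.inl NS.start]
  ∨ (∃ q u c v, Reach G (u ++ c :: v) ∧ z = cfg q u c v ∧ StateOK G q u c v)
  ∨ (∃ (w : List T) (c : Symb N T) (v : List (Symb N T)) (lb : Bool),
      Reach G (List.map Sum.inr w ++ c :: v) ∧
      z = List.map Sum.inr w ++ hS QS.fin c lb v.isEmpty :: fl v false true)
  ∨ (∃ w : List T, Reach G (List.map Sum.inr w) ∧ z = List.map Sum.inr w)

lemma inv_step {z z₂ : List (Symb (NS N T) T)} (hz : Inv G z)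
    (hstep : (simG G).Step z z₂) : Inv G z₂ := by
  obtain ⟨lh, rh, u', v', hmem, hz1, hz2⟩ := hstep
  rcases hz with hc1 | ⟨q, u, c, v, hreach, rfl, hsok⟩ | ⟨w, c, v, lb, hreach, rfl⟩ |
    ⟨w, hreach, rfl⟩
  -- ===================== case 1 : start symbol =====================
  · subst hc1
    rcases hmem with ((((((((h | h) | h) | h) | h) | h) | h) | h) | h) | h
    · -- F1
      rcases h with ⟨rfl, rfl⟩
      have hlen := congrArg List.length hz1
      simp at hlen
      obtain ⟨rfl, rfl⟩ : u' = [] ∧ v' = [] :=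
        ⟨List.length_eq_zero_iff.mp (by omega), List.length_eq_zero_iff.mp (by omega)⟩
      refine Or.inr (Or.inl ⟨QS.idle, [], Sum.inl G.start, [], Relation.ReflTransGen.refl,
        ?_, trivial⟩)
      simp [hz2, cfg]
    · obtain ⟨c, d, l, r, l', r', -, -, h⟩ := h
      simp only [Prod.mk.injEq] at h; obtain ⟨rfl, rfl⟩ := h
      have hm := mem_of_eq_append hz1 _ List.mem_cons_self; simp at hm
    · obtain ⟨c, r, rt, b, -, -, -, -, h⟩ := h
      simp only [Prod.mk.injEq] at h; obtain ⟨rfl, rfl⟩ := h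
      have hm := mem_of_eq_append hz1 _ List.mem_cons_self; simp at hm
    · obtain ⟨c, d, l, r, l', r', rt, b, b', -, -, -, -, -, h⟩ := h
      simp only [Prod.mk.injEq] at h; obtain ⟨rfl, rfl⟩ := h
      have hm := mem_of_eq_append hz1 _ List.mem_cons_self; simp at hm
    · obtain ⟨c, l, rt, -, -, h⟩ := h
      simp only [Prod.mk.injEq] at h; obtain ⟨rfl, rfl⟩ := h
      have hm := mem_of_eq_append hz1 _ List.mem_cons_self; simp at hm
    · obtain ⟨c, d, l, r, l', r', rt, -, -, -, h⟩ := h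
      simp only [Prod.mk.injEq] at h; obtain ⟨rfl, rfl⟩ := h
      have hm := mem_of_eq_append hz1 _ List.mem_cons_self; simp at hm
    · obtain ⟨rt, l, r, -, h⟩ := h
      simp only [Prod.mk.injEq] at h; obtain ⟨rfl, rfl⟩ := h
      have hm := mem_of_eq_append hz1 _ List.mem_cons_self; simp at hm
    · obtain ⟨c, r, -, h⟩ := h
      simp only [Prod.mk.injEq] at h; obtain ⟨rfl, rfl⟩ := h
      have hm := mem_of_eq_append hz1 _ List.mem_cons_self; simp at hm
    · obtain ⟨t, d, l, l', r', -, -, h⟩ := h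
      simp only [Prod.mk.injEq] at h; obtain ⟨rfl, rfl⟩ := h
      have hm := mem_of_eq_append hz1 _ List.mem_cons_self; simp at hm
    · obtain ⟨t, l, -, h⟩ := h
      simp only [Prod.mk.injEq] at h; obtain ⟨rfl, rfl⟩ := h
      have hm := mem_of_eq_append hz1 _ List.mem_cons_self; simp at hm
  -- ===================== case 2 : configuration =====================
  · simp only [cfg] at hz1
    have hp := fl_no_head (N := N) (T := T) u true false
    have hs := fl_no_head (N := N) (T := T) v false true
    rcases hmem with ((((((((h | h) | h) | h) | h) | h) | h) | h) | h) | h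
    · -- F1 : impossible
      rcases h with ⟨rfl, rfl⟩
      have hm := mem_of_eq_append hz1 _ List.mem_cons_self
      exfalso
      simp only [List.mem_append, List.mem_cons] at hm
      rcases hm with hm | hm | hm
      · exact start_not_fl _ _ _ hm
      · exact hS_ne_start _ _ _ _ hm.symm
      · exact start_not_fl _ _ _ hm
    · -- F2 : idle moves left
      obtain ⟨c₂, d₂, l₂, r₂, l₂', r₂', hc₂, hd₂, h⟩ := h
      simp only [Prod.mk.injEq] at h
      obtain ⟨rfl, rfl⟩ := h
      obtain ⟨e1, e2, rfl⟩ := align1 (by simp) hp hs hz1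
      obtain ⟨rfl, rfl, rfl, rfl⟩ := hS_inj.mp e2
      obtain ⟨u₀, cl, rfl, rfl, e5⟩ := fl_concat_inv e1.symm
      obtain ⟨rfl, rfl, rfl⟩ := pS_inj.mp e5.symm
      refine Or.inr (Or.inl ⟨QS.idle, u₀, cl, d₂ :: v, ?_, ?_, trivial⟩)
      · have heq : u₀ ++ cl :: d₂ :: v = (u₀ ++ [cl]) ++ d₂ :: v := by simp
        rw [heq]; exact hreach
      · rw [hz2]; simp [cfg]
    · -- F3 : start a check
      obtain ⟨c₂, r₂, rt, b, hc₂, hrt, hper, hfor, h⟩ := h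
      simp only [Prod.mk.injEq] at h
      obtain ⟨rfl, rfl⟩ := h
      obtain ⟨rfl, e2, e3⟩ := align0 (by simp) hp hs hz1
      obtain ⟨rfl, rfl, e4, rfl⟩ := hS_inj.mp e2
      have hu : u = [] := List.isEmpty_iff.mp e4.symm
      subst hu
      simp only [List.nil_append] at e3
      subst e3
      refine Or.inr (Or.inl ⟨QS.check rt b, [], c₂, v, hreach, ?_, hrt, ?_, ?_⟩)
      · rw [hz2]; simp [cfg]
      · intro hb
        rw [List.nil_append, alph_singleton]
        exact hper hb
      · intro a ha
        rw [List.nil_append, alph_singleton]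
        intro hac
        rw [Set.mem_singleton_iff] at hac
        subst hac
        exact hfor ha
    · -- F4 : check moves right
      obtain ⟨c₂, d₂, l₂, r₂, l₂', r₂', rt, b, b', hc₂, hd₂, hrt, hcond, hdF, h⟩ := h
      simp only [Prod.mk.injEq] at h
      obtain ⟨rfl, rfl⟩ := h
      obtain ⟨rfl, e2, e3⟩ := align0 (by simp) hp hs hz1
      obtain ⟨e0, rfl, rfl, rfl⟩ := hS_inj.mp e2
      have hq : q = QS.check rt b := e0.symm
      subst hq
      obtain ⟨d₀, v₀, rfl, e5, rfl⟩ : ∃ d₀ v₀, v = d₀ :: v₀ ∧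
          pS d₂ l₂' r₂' = pS d₀ false (v₀.isEmpty && true) ∧ v' = fl v₀ false true := by
        cases e3' : fl v false true with
        | nil => rw [e3'] at e3; simp at e3
        | cons y ys =>
            rw [e3'] at e3
            obtain ⟨d₀, v₀, rfl, hy, hys⟩ := fl_cons_inv e3'
            simp only [List.cons_append, List.cons.injEq] at e3
            obtain ⟨rfl, rfl⟩ := e3
            exact ⟨d₀, v₀, rfl, hy ▸ rfl, by simpa using hys⟩
      obtain ⟨rfl, rfl, rfl⟩ := pS_inj.mp e5
      obtain ⟨hrules, hperOK, hforOK⟩ := hsok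
      refine Or.inr (Or.inl ⟨QS.check rt b', u ++ [c₂], d₂, v₀, ?_, ?_, hrt, ?_, ?_⟩)
      · have heq : (u ++ [c₂]) ++ d₂ :: v₀ = u ++ c₂ :: d₂ :: v₀ := by simp
        rw [heq]; exact hreach
      · rw [hz2]; simp [cfg, fl_concat]
      · intro hb'
        rcases hcond hb' with hb | hPd
        · intro a ha
          have := hperOK hb ha
          simp only [mem_alph, List.mem_append, List.mem_singleton] at this ⊢
          tauto
        · intro a ha
          have := hPd ha
          rw [Set.mem_singleton_iff] at this
          subst this
          simp
      · intro a ha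
        have h1 := hforOK a ha
        simp only [mem_alph, List.mem_append, List.mem_singleton] at h1 ⊢
        rintro ((h2 | h2) | h2)
        · exact h1 (Or.inl h2)
        · exact h1 (Or.inr h2)
        · exact hdF (h2 ▸ ha)
    · -- F5 : check finished, switch to seek
      obtain ⟨c₂, l₂, rt, hc₂, hrt, h⟩ := h
      simp only [Prod.mk.injEq] at h
      obtain ⟨rfl, rfl⟩ := h
      obtain ⟨rfl, e2, e3⟩ := align0 (by simp) hp hs hz1
      obtain ⟨e0, rfl, rfl, e4⟩ := hS_inj.mp e2
      have hq : q = QS.check rt true := e0.symm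
      subst hq
      have hv : v = [] := List.isEmpty_iff.mp e4.symm
      subst hv
      simp only [List.nil_append, fl_nil] at e3
      subst e3
      obtain ⟨hrules, hperOK, hforOK⟩ := hsok
      refine Or.inr (Or.inl ⟨QS.seek rt, u, c₂, [], hreach, ?_, hrt, hperOK rfl, hforOK⟩)
      rw [hz2]; simp [cfg]
    · -- F6 : seek moves left
      obtain ⟨c₂, d₂, l₂, r₂, l₂', r₂', rt, hc₂, hd₂, hrt, h⟩ := h
      simp only [Prod.mk.injEq] at h
      obtain ⟨rfl, rfl⟩ := h
      obtain ⟨e1, e2, rfl⟩ := align1 (by simp) hp hs hz1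
      obtain ⟨e0, rfl, rfl, rfl⟩ := hS_inj.mp e2
      have hq : q = QS.seek rt := e0.symm
      subst hq
      obtain ⟨u₀, cl, rfl, rfl, e5⟩ := fl_concat_inv e1.symm
      obtain ⟨rfl, rfl, rfl⟩ := pS_inj.mp e5.symm
      obtain ⟨hrules, hperOK, hforOK⟩ := hsok
      have heq : u₀ ++ cl :: d₂ :: v = (u₀ ++ [cl]) ++ d₂ :: v := by simp
      refine Or.inr (Or.inl ⟨QS.seek rt, u₀, cl, d₂ :: v, ?_, ?_, hrt, ?_, ?_⟩)
      · rw [heq]; exact hreach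
      · rw [hz2]; simp [cfg]
      · rw [heq]; exact hperOK
      · rw [heq]; exact hforOK
    · -- F7 : apply the production
      obtain ⟨rt, l₂, r₂, hrt, h⟩ := h
      simp only [Prod.mk.injEq] at h
      obtain ⟨rfl, rfl⟩ := h
      obtain ⟨rfl, e2, e3⟩ := align0 (by simp) hp hs hz1
      obtain ⟨e0, e1, rfl, rfl⟩ := hS_inj.mp e2
      have hq : q = QS.seek rt := e0.symm
      subst hq
      have hc : c = Sum.inl rt.1 := e1.symm
      subst hc
      simp only [List.nil_append] at e3
      subst e3
      obtain ⟨hrules, hperOK, hforOK⟩ := hsok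
      obtain ⟨x₀, xt, hx⟩ : ∃ x₀ xt, rt.2.1 = x₀ :: xt := by
        cases hx : rt.2.1 with
        | nil => exact absurd hx (G.ne rt hrt)
        | cons a t => exact ⟨a, t, rfl⟩
      have hstep' : G.Step true (u ++ Sum.inl rt.1 :: v) (u ++ rt.2.1 ++ v) := by
        refine ⟨rt.1, rt.2.1, rt.2.2.1, rt.2.2.2, u, v, ?_, rfl, rfl, ?_, ?_⟩
        · have heta : (rt.1, rt.2.1, rt.2.2.1, rt.2.2.2) = rt := rfl
          rw [heta]; exact hrt
        · simpa using hperOK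
        · simpa using hforOK
      refine Or.inr (Or.inl ⟨QS.idle, u, x₀, xt ++ v, ?_, ?_, trivial⟩)
      · have heq : u ++ x₀ :: (xt ++ v) = u ++ rt.2.1 ++ v := by rw [hx]; simp
        rw [heq]
        exact hreach.tail hstep'
      · rw [hz2, hx]
        simp only [cfg, List.append_assoc]
        rw [applyRHS_glue]
    · -- F8 : switch to the final sweep
      obtain ⟨c₂, r₂, hc₂, h⟩ := h
      simp only [Prod.mk.injEq] at h
      obtain ⟨rfl, rfl⟩ := h
      obtain ⟨rfl, e2, e3⟩ := align0 (by simp) hp hs hz1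
      obtain ⟨e0, rfl, e4, rfl⟩ := hS_inj.mp e2
      have hq : q = QS.idle := e0.symm
      subst hq
      have hu : u = [] := List.isEmpty_iff.mp e4.symm
      subst hu
      simp only [List.nil_append] at e3
      subst e3
      refine Or.inr (Or.inr (Or.inl ⟨[], c₂, v, true, by simpa using hreach, ?_⟩))
      rw [hz2]; simp
    · -- F9 on a cfg : impossible (state fin)
      obtain ⟨t, d₂, l₂, l₂', r₂', ht, hd₂, h⟩ := h
      simp only [Prod.mk.injEq] at h
      obtain ⟨rfl, rfl⟩ := h
      obtain ⟨rfl, e2, e3⟩ := align0 (by simp) hp hs hz1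
      obtain ⟨e0, -, -, -⟩ := hS_inj.mp e2
      exact absurd hsok (by rw [← e0]; simp [StateOK])
    · -- F10 on a cfg : impossible (state fin)
      obtain ⟨t, l₂, ht, h⟩ := h
      simp only [Prod.mk.injEq] at h
      obtain ⟨rfl, rfl⟩ := h
      obtain ⟨rfl, e2, e3⟩ := align0 (by simp) hp hs hz1
      obtain ⟨e0, -, -, -⟩ := hS_inj.mp e2
      exact absurd hsok (by rw [← e0]; simp [StateOK])
  -- ===================== case 3 : final sweep =====================
  · have hp := map_inr_no_head (N := N) (T := T) w
    have hs := fl_no_head (N := N) (T := T) v false true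
    rcases hmem with ((((((((h | h) | h) | h) | h) | h) | h) | h) | h) | h
    · -- F1 : impossible
      rcases h with ⟨rfl, rfl⟩
      have hm := mem_of_eq_append hz1 _ List.mem_cons_self
      exfalso
      simp only [List.mem_append, List.mem_cons] at hm
      rcases hm with hm | hm | hm
      · obtain ⟨t, -, hcontra⟩ := List.mem_map.mp hm; simp at hcontra
      · exact hS_ne_start _ _ _ _ hm.symm
      · exact start_not_fl _ _ _ hm
    · -- F2 : impossible (idle ≠ fin)
      obtain ⟨c₂, d₂, l₂, r₂, l₂', r₂', -, -, h⟩ := h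
      simp only [Prod.mk.injEq] at h; obtain ⟨rfl, rfl⟩ := h
      obtain ⟨-, e2, -⟩ := align1 (by simp) hp hs hz1
      obtain ⟨e0, -, -, -⟩ := hS_inj.mp e2
      exact absurd e0 (by simp)
    · -- F3 : impossible
      obtain ⟨c₂, r₂, rt, b, -, -, -, -, h⟩ := h
      simp only [Prod.mk.injEq] at h; obtain ⟨rfl, rfl⟩ := h
      obtain ⟨-, e2, -⟩ := align0 (by simp) hp hs hz1
      obtain ⟨e0, -, -, -⟩ := hS_inj.mp e2
      exact absurd e0 (by simp)
    · -- F4 : impossible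
      obtain ⟨c₂, d₂, l₂, r₂, l₂', r₂', rt, b, b', -, -, -, -, -, h⟩ := h
      simp only [Prod.mk.injEq] at h; obtain ⟨rfl, rfl⟩ := h
      obtain ⟨-, e2, -⟩ := align0 (by simp) hp hs hz1
      obtain ⟨e0, -, -, -⟩ := hS_inj.mp e2
      exact absurd e0 (by simp)
    · -- F5 : impossible
      obtain ⟨c₂, l₂, rt, -, -, h⟩ := h
      simp only [Prod.mk.injEq] at h; obtain ⟨rfl, rfl⟩ := h
      obtain ⟨-, e2, -⟩ := align0 (by simp) hp hs hz1
      obtain ⟨e0, -, -, -⟩ := hS_inj.mp e2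
      exact absurd e0 (by simp)
    · -- F6 : impossible
      obtain ⟨c₂, d₂, l₂, r₂, l₂', r₂', rt, -, -, -, h⟩ := h
      simp only [Prod.mk.injEq] at h; obtain ⟨rfl, rfl⟩ := h
      obtain ⟨-, e2, -⟩ := align1 (by simp) hp hs hz1
      obtain ⟨e0, -, -, -⟩ := hS_inj.mp e2
      exact absurd e0 (by simp)
    · -- F7 : impossible
      obtain ⟨rt, l₂, r₂, -, h⟩ := h
      simp only [Prod.mk.injEq] at h; obtain ⟨rfl, rfl⟩ := h
      obtain ⟨-, e2, -⟩ := align0 (by simp) hp hs hz1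
      obtain ⟨e0, -, -, -⟩ := hS_inj.mp e2
      exact absurd e0 (by simp)
    · -- F8 : impossible
      obtain ⟨c₂, r₂, -, h⟩ := h
      simp only [Prod.mk.injEq] at h; obtain ⟨rfl, rfl⟩ := h
      obtain ⟨-, e2, -⟩ := align0 (by simp) hp hs hz1
      obtain ⟨e0, -, -, -⟩ := hS_inj.mp e2
      exact absurd e0 (by simp)
    · -- F9 : final sweep moves right
      obtain ⟨t, d₂, l₂, l₂', r₂', ht, hd₂, h⟩ := h
      simp only [Prod.mk.injEq] at h
      obtain ⟨rfl, rfl⟩ := h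
      obtain ⟨rfl, e2, e3⟩ := align0 (by simp) hp hs hz1
      obtain ⟨-, e1, rfl, -⟩ := hS_inj.mp e2
      have hc : c = Sum.inr t := e1.symm
      subst hc
      obtain ⟨d₀, v₀, rfl, e5, rfl⟩ : ∃ d₀ v₀, v = d₀ :: v₀ ∧
          pS d₂ l₂' r₂' = pS d₀ false (v₀.isEmpty && true) ∧ v' = fl v₀ false true := by
        cases e3' : fl v false true with
        | nil => rw [e3'] at e3; simp at e3
        | cons y ys =>
            rw [e3'] at e3
            obtain ⟨d₀, v₀, rfl, hy, hys⟩ := fl_cons_inv e3'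
            simp only [List.cons_append, List.cons.injEq] at e3
            obtain ⟨rfl, rfl⟩ := e3
            exact ⟨d₀, v₀, rfl, hy ▸ rfl, by simpa using hys⟩
      obtain ⟨rfl, rfl, rfl⟩ := pS_inj.mp e5
      refine Or.inr (Or.inr (Or.inl ⟨w ++ [t], d₂, v₀, false, ?_, ?_⟩))
      · have heq : List.map Sum.inr (w ++ [t]) ++ d₂ :: v₀ =
            List.map Sum.inr w ++ Sum.inr t :: d₂ :: v₀ := by simp
        rw [heq]; exact hreach
      · rw [hz2]; simp
    · -- F10 : final sweep ends
      obtain ⟨t, l₂, ht, h⟩ := h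
      simp only [Prod.mk.injEq] at h
      obtain ⟨rfl, rfl⟩ := h
      obtain ⟨rfl, e2, e3⟩ := align0 (by simp) hp hs hz1
      obtain ⟨-, e1, -, e4⟩ := hS_inj.mp e2
      have hc : c = Sum.inr t := e1.symm
      subst hc
      have hv : v = [] := List.isEmpty_iff.mp e4.symm
      subst hv
      simp only [List.nil_append, fl_nil] at e3
      subst e3
      refine Or.inr (Or.inr (Or.inr ⟨w ++ [t], ?_, ?_⟩))
      · have heq : List.map Sum.inr (w ++ [t]) =
            List.map Sum.inr w ++ Sum.inr t :: ([] : List (Symb N T)) := by simp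
        rw [heq]; exact hreach
      · rw [hz2]; simp
  -- ===================== case 4 : terminal word =====================
  · exfalso
    rcases hmem with ((((((((h | h) | h) | h) | h) | h) | h) | h) | h) | h
    · rcases h with ⟨rfl, rfl⟩
      have hm := mem_of_eq_append hz1 _ List.mem_cons_self
      simp [pS, hS] at hm
    · obtain ⟨c, d, l, r, l', r', -, -, h⟩ := h
      simp only [Prod.mk.injEq] at h; obtain ⟨rfl, rfl⟩ := h
      have hm := mem_of_eq_append hz1 _ List.mem_cons_self
      simp [pS, hS] at hm
    · obtain ⟨c, r, rt, b, -, -, -, -, h⟩ := h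
      simp only [Prod.mk.injEq] at h; obtain ⟨rfl, rfl⟩ := h
      have hm := mem_of_eq_append hz1 _ List.mem_cons_self
      simp [pS, hS] at hm
    · obtain ⟨c, d, l, r, l', r', rt, b, b', -, -, -, -, -, h⟩ := h
      simp only [Prod.mk.injEq] at h; obtain ⟨rfl, rfl⟩ := h
      have hm := mem_of_eq_append hz1 _ List.mem_cons_self
      simp [pS, hS] at hm
    · obtain ⟨c, l, rt, -, -, h⟩ := h
      simp only [Prod.mk.injEq] at h; obtain ⟨rfl, rfl⟩ := h
      have hm := mem_of_eq_append hz1 _ List.mem_cons_self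
      simp [pS, hS] at hm
    · obtain ⟨c, d, l, r, l', r', rt, -, -, -, h⟩ := h
      simp only [Prod.mk.injEq] at h; obtain ⟨rfl, rfl⟩ := h
      have hm := mem_of_eq_append hz1 _ List.mem_cons_self
      simp [pS, hS] at hm
    · obtain ⟨rt, l, r, -, h⟩ := h
      simp only [Prod.mk.injEq] at h; obtain ⟨rfl, rfl⟩ := h
      have hm := mem_of_eq_append hz1 _ List.mem_cons_self
      simp [pS, hS] at hm
    · obtain ⟨c, r, -, h⟩ := h
      simp only [Prod.mk.injEq] at h; obtain ⟨rfl, rfl⟩ := h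
      have hm := mem_of_eq_append hz1 _ List.mem_cons_self
      simp [pS, hS] at hm
    · obtain ⟨t, d, l, l', r', -, -, h⟩ := h
      simp only [Prod.mk.injEq] at h; obtain ⟨rfl, rfl⟩ := h
      have hm := mem_of_eq_append hz1 _ List.mem_cons_self
      simp [pS, hS] at hm
    · obtain ⟨t, l, -, h⟩ := h
      simp only [Prod.mk.injEq] at h; obtain ⟨rfl, rfl⟩ := h
      have hm := mem_of_eq_append hz1 _ List.mem_cons_self
      simp [pS, hS] at hm

end SC11toCS
namespace SC11toCS

variable {N T : Type} (G : SCG N T)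

lemma hS_not_mem_map_inr (q : QS N T) (c l r) (w : List T) :
    hS q c l r ∉ (List.map Sum.inr w : List (Symb (NS N T) T)) := by
  intro hm
  obtain ⟨t, -, h⟩ := List.mem_map.mp hm
  simp [hS] at h

lemma sound : (simG G).Lang ⊆ G.Lang true := by
  intro w hw
  have hw' : Relation.ReflTransGen (simG G).Step [Sum.inl NS.start] (w.map Sum.inr) := hw
  have hinv : Inv G (w.map Sum.inr) := by
    have : ∀ z, Relation.ReflTransGen (simG G).Step [Sum.inl NS.start] z → Inv G z := by
      intro z hz
      induction hz with
      | refl => exact Or.inl rfl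
      | tail _ hst ih => exact inv_step G ih hst
    exact this _ hw'
  rcases hinv with h | ⟨q, u, c, v, -, h, -⟩ | ⟨w', c, v, lb, -, h⟩ | ⟨w', hreach, h⟩
  · -- impossible : map inr w = [inl start]
    exfalso
    cases w with
    | nil => simp at h
    | cons t w' => simp at h
  · -- impossible : contains a head symbol
    exfalso
    have hm : hS q c u.isEmpty v.isEmpty ∈ (List.map Sum.inr w : List (Symb (NS N T) T)) := by
      rw [h]; simp [cfg]
    exact hS_not_mem_map_inr _ _ _ _ _ hm
  · exfalso
    have hm : hS QS.fin c lb v.isEmpty ∈ (List.map Sum.inr w : List (Symb (NS N T) T)) := by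
      rw [h]; simp
    exact hS_not_mem_map_inr _ _ _ _ _ hm
  · -- the good case
    have hww : w = w' := by
      have : Function.Injective (Sum.inr : T → Symb (NS N T) T) := Sum.inr_injective
      exact List.map_injective_iff.mpr this h
    subst hww
    exact hreach

lemma lang_eq : (simG G).Lang = G.Lang true :=
  Set.Subset.antisymm (sound G) (complete G)

end SC11toCS

/-- every language of a nonerasing semi-conditional grammar of
degree (1,1) is context-sensitive. -/
theorem sc11_subset_cs (T : Type) : SC11 T ⊆ CS T := by
  rintro L ⟨N, G, rfl⟩
  exact ⟨SC11toCS.NS N T, SC11toCS.simG G, SC11toCS.lang_eq G⟩
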